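/- Let Δ > 0 and let Q_Δ be the uniform quantizer Q_Δ(x) = Δ·⌊x/Δ + 1/2⌋. Let X be a real-valued random variable and let U be a random variable independent of X, uniformly distributed on [-Δ/2, Δ/2]. Define the quantization error e = Q_Δ(X + U) − (X + U). Then the joint law of (X, e) equals the product of the law of X and the uniform distribution on [-Δ/2, Δ/2]; in particular, e is uniformly distributed on [-Δ/2, Δ/2] and independent of X. -/

import Mathlib

open MeasureTheory ProbabilityTheory Set

/-- The uniform quantizer with step size `Δ`: rounding to the nearest multiple of `Δ`. -/
noncomputable def uniformQuantizer (Δ x : ℝ) : ℝ := Δ * ⌊x / Δ + 1 / 2⌋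

/-- The uniform probability distribution on the interval `[a, b]`. -/
noncomputable def uniformIcc (a b : ℝ) : Measure ℝ := volume[|Set.Icc a b]

/- Auxiliary lemmas -/

lemma toIocMod_formula {Δ : ℝ} (hΔ : 0 < Δ) (a : ℝ) :
    toIocMod hΔ a = fun b => b - Δ * ((⌈(b - a) / Δ⌉ : ℝ) - 1) := by
  funext b
  have h1 : (b - a) / Δ ≤ (⌈(b - a) / Δ⌉ : ℝ) := Int.le_ceil _
  have h2 : (⌈(b - a) / Δ⌉ : ℝ) < (b - a) / Δ + 1 := Int.ceil_lt_add_one _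
  have hb1 : b - a ≤ Δ * (⌈(b - a) / Δ⌉ : ℝ) := by
    rw [← div_le_iff₀' hΔ]; exact h1
  have hb2 : Δ * ((⌈(b - a) / Δ⌉ : ℝ) - 1) < b - a := by
    rw [mul_comm, ← lt_div_iff₀ hΔ]; linarith
  refine (toIocMod_eq_iff hΔ).2 ⟨⟨by linarith, by linarith⟩, ⌈(b - a) / Δ⌉ - 1, ?_⟩
  push_cast [zsmul_eq_mul]
  ring

lemma measurable_toIocMod {Δ : ℝ} (hΔ : 0 < Δ) (a : ℝ) : Measurable (toIocMod hΔ a) := by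
  rw [toIocMod_formula hΔ a]
  exact measurable_id.sub
    (measurable_const.mul ((measurable_from_top.comp
      ((measurable_id.sub measurable_const).div_const Δ).ceil).sub measurable_const))

lemma map_sub_right_restrict (d : ℝ) (s : Set ℝ) :
    Measure.map (fun y : ℝ => y - d) (volume.restrict s)
      = volume.restrict ((fun y : ℝ => y - d) '' s) :=
  ((measurePreserving_sub_right volume d).restrict_image_emb
    (MeasurableEquiv.subRight d).measurableEmbedding s).map_eq

lemma map_const_sub_restrict (c : ℝ) (s : Set ℝ) :
    Measure.map (fun y : ℝ => c - y) (volume.restrict s)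
      = volume.restrict ((fun y : ℝ => c - y) '' s) :=
  ((Measure.measurePreserving_sub_left volume c).restrict_image_emb
    (MeasurableEquiv.subLeft c).measurableEmbedding s).map_eq

/-- Pushing Lebesgue measure on any interval `(c, c+Δ]` forward through reduction mod `Δ`
to the fundamental domain `(a, a+Δ]` gives Lebesgue measure there. -/
lemma map_toIocMod_restrict {Δ : ℝ} (hΔ : 0 < Δ) (a c : ℝ) :
    Measure.map (toIocMod hΔ a) (volume.restrict (Ioc c (c + Δ)))
      = volume.restrict (Ioc a (a + Δ)) := by
  set k : ℤ := ⌊(c - a) / Δ⌋ with hk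
  have hk1 : (k : ℝ) ≤ (c - a) / Δ := Int.floor_le _
  have hk2 : (c - a) / Δ < (k : ℝ) + 1 := Int.lt_floor_add_one _
  have hka : a + k * Δ ≤ c := by
    have := (le_div_iff₀ hΔ).1 hk1; linarith
  have hkb : c < a + ((k : ℝ) + 1) * Δ := by
    have := (div_lt_iff₀ hΔ).1 hk2; linarith
  set m : ℝ := a + ((k : ℝ) + 1) * Δ with hm
  have hmc : m ≤ c + Δ := by simp only [hm]; linarith
  have hsplit : Ioc c (c + Δ) = Ioc c m ∪ Ioc m (c + Δ) :=
    (Ioc_union_Ioc_eq_Ioc hkb.le hmc).symm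
  have hdisj : Disjoint (Ioc c m) (Ioc m (c + Δ)) := by
    rw [Set.disjoint_left]
    rintro y ⟨_, h1⟩ ⟨h2, _⟩
    exact absurd h1 h2.not_ge
  have hmeas := measurable_toIocMod hΔ a
  rw [hsplit, Measure.restrict_union hdisj measurableSet_Ioc, Measure.map_add _ _ hmeas]
  have e1 : Measure.map (toIocMod hΔ a) (volume.restrict (Ioc c m))
      = volume.restrict (Ioc (c - k * Δ) (a + Δ)) := by
    have hcong : Measure.map (toIocMod hΔ a) (volume.restrict (Ioc c m))
        = Measure.map (fun y : ℝ => y - k * Δ) (volume.restrict (Ioc c m)) := by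
      refine Measure.map_congr ((ae_restrict_iff' measurableSet_Ioc).2 (ae_of_all _ ?_))
      rintro y ⟨hy1, hy2⟩
      show toIocMod hΔ a y = y - (k : ℝ) * Δ
      have hy2' : y ≤ a + ((k : ℝ) + 1) * Δ := by rw [← hm]; exact hy2
      refine (toIocMod_eq_iff hΔ).2 ⟨⟨by linarith, by linarith⟩,
        k, by rw [zsmul_eq_mul]; ring⟩
    rw [hcong, map_sub_right_restrict, image_sub_const_Ioc]
    congr 1
    simp only [hm]; ring
  have e2 : Measure.map (toIocMod hΔ a) (volume.restrict (Ioc m (c + Δ)))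
      = volume.restrict (Ioc a (c - k * Δ)) := by
    have hcong : Measure.map (toIocMod hΔ a) (volume.restrict (Ioc m (c + Δ)))
        = Measure.map (fun y : ℝ => y - ((k : ℝ) + 1) * Δ) (volume.restrict (Ioc m (c + Δ))) := by
      refine Measure.map_congr ((ae_restrict_iff' measurableSet_Ioc).2 (ae_of_all _ ?_))
      rintro y ⟨hy1, hy2⟩
      have hy1' : a + ((k : ℝ) + 1) * Δ < y := by simpa [hm] using hy1
      have hcc : c - a ≤ ((k : ℝ) + 1) * Δ := by
        have := (div_lt_iff₀ hΔ).1 hk2; linarith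
      show toIocMod hΔ a y = y - ((k : ℝ) + 1) * Δ
      refine (toIocMod_eq_iff hΔ).2 ⟨⟨by linarith, by linarith⟩,
        k + 1, by push_cast [zsmul_eq_mul]; ring⟩
    rw [hcong, map_sub_right_restrict, image_sub_const_Ioc]
    congr 1; simp only [hm]; ring
  have hdisj2 : Disjoint (Ioc a (c - (k : ℝ) * Δ)) (Ioc (c - (k : ℝ) * Δ) (a + Δ)) := by
    rw [Set.disjoint_left]
    rintro y ⟨_, h1⟩ ⟨h2, _⟩
    exact absurd h1 h2.not_ge
  rw [e1, e2, add_comm, ← Measure.restrict_union hdisj2 measurableSet_Ioc,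
    Ioc_union_Ioc_eq_Ioc (by linarith) (by linarith)]

/-- The quantization error is reduction of `-y` mod `Δ` to `(-Δ/2, Δ/2]`. -/
lemma quant_error_eq {Δ : ℝ} (hΔ : 0 < Δ) (y : ℝ) :
    uniformQuantizer Δ y - y = toIocMod hΔ (-(Δ / 2)) (-y) := by
  symm
  have h1 : (⌊y / Δ + 1 / 2⌋ : ℝ) ≤ y / Δ + 1 / 2 := Int.floor_le _
  have h2 : y / Δ + 1 / 2 - 1 < (⌊y / Δ + 1 / 2⌋ : ℝ) := Int.sub_one_lt_floor _
  have hb1 : Δ * (⌊y / Δ + 1 / 2⌋ : ℝ) ≤ Δ * (y / Δ + 1 / 2) :=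
    mul_le_mul_of_nonneg_left h1 hΔ.le
  have hb2 : Δ * (y / Δ + 1 / 2 - 1) < Δ * (⌊y / Δ + 1 / 2⌋ : ℝ) :=
    (mul_lt_mul_iff_right₀ hΔ).2 h2
  have hyd : Δ * (y / Δ) = y := mul_div_cancel₀ y hΔ.ne'
  rw [mul_add, hyd] at hb1
  rw [mul_sub, mul_add, hyd] at hb2
  refine (toIocMod_eq_iff hΔ).2 ⟨⟨?_, ?_⟩, -⌊y / Δ + 1 / 2⌋, ?_⟩
  · simp only [uniformQuantizer]; linarith
  · simp only [uniformQuantizer]; linarith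
  · simp only [uniformQuantizer]
    push_cast [zsmul_eq_mul]
    ring

lemma uniformIcc_eq (Δ : ℝ) :
    uniformIcc (-(Δ / 2)) (Δ / 2)
      = (ENNReal.ofReal Δ)⁻¹ • volume.restrict (Icc (-(Δ / 2)) (Δ / 2)) := by
  rw [uniformIcc, ProbabilityTheory.cond, Real.volume_Icc]
  norm_num

lemma isProbabilityMeasure_uniformIcc {Δ : ℝ} (hΔ : 0 < Δ) :
    IsProbabilityMeasure (uniformIcc (-(Δ / 2)) (Δ / 2)) := by
  rw [uniformIcc]
  refine cond_isProbabilityMeasure_of_finite ?_ ?_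
  · rw [Real.volume_Icc]
    simp only [ne_eq, ENNReal.ofReal_eq_zero, not_le]
    linarith
  · rw [Real.volume_Icc]
    exact ENNReal.ofReal_ne_top

/-- Key fiber lemma: for each fixed `x`, the quantization error of `x + U` with `U` uniform
on `[-Δ/2, Δ/2]` is again uniform on `[-Δ/2, Δ/2]`. -/
lemma fiber_map {Δ : ℝ} (hΔ : 0 < Δ) (x : ℝ) :
    Measure.map (fun u : ℝ => uniformQuantizer Δ (x + u) - (x + u))
      (uniformIcc (-(Δ / 2)) (Δ / 2)) = uniformIcc (-(Δ / 2)) (Δ / 2) := by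
  have hfun : (fun u : ℝ => uniformQuantizer Δ (x + u) - (x + u))
      = (toIocMod hΔ (-(Δ / 2))) ∘ (fun u : ℝ => -x - u) := by
    funext u
    simp only [Function.comp_apply, quant_error_eq hΔ (x + u)]
    ring_nf
  have hsub : Measurable (fun u : ℝ => -x - u) := measurable_const.sub measurable_id
  rw [hfun, uniformIcc_eq,
    ← Measure.map_map (measurable_toIocMod hΔ _) hsub,
    Measure.map_smul, Measure.map_smul, map_const_sub_restrict, image_const_sub_Icc]
  have hIcc1 : volume.restrict (Icc (-x - Δ / 2) (-x - -(Δ / 2)))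
      = volume.restrict (Ioc (-x - Δ / 2) ((-x - Δ / 2) + Δ)) := by
    rw [Measure.restrict_congr_set (Ioc_ae_eq_Icc (μ := volume)).symm]
    congr 1
    ring
  rw [hIcc1, map_toIocMod_restrict hΔ,
    Measure.restrict_congr_set (Ioc_ae_eq_Icc (μ := volume))]
  congr 1
  ring

/-- **Dithered quantization (Schuchman, uniform dither).**
If `U` is uniform on `[-Δ/2, Δ/2]` and independent of `X`, then the quantization error
`e = Q_Δ(X + U) − (X + U)` is uniform on `[-Δ/2, Δ/2]` and independent of `X`:
the joint law of `(X, e)` is the product of the law of `X` and the uniform law. -/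
theorem dithered_quantization_error_uniform_indep
    {Ω : Type*} [MeasurableSpace Ω] (P : Measure Ω) [IsProbabilityMeasure P]
    (Δ : ℝ) (hΔ : 0 < Δ)
    (X U : Ω → ℝ) (hX : Measurable X) (hU : Measurable U)
    (hindep : IndepFun X U P)
    (hUlaw : Measure.map U P = uniformIcc (-(Δ / 2)) (Δ / 2))
    (e : Ω → ℝ)
    (he : e = fun ω => uniformQuantizer Δ (X ω + U ω) - (X ω + U ω)) :
    Measure.map (fun ω => (X ω, e ω)) P
      = (Measure.map X P).prod (uniformIcc (-(Δ / 2)) (Δ / 2)) := by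
  set ν : Measure ℝ := uniformIcc (-(Δ / 2)) (Δ / 2) with hν
  set μ : Measure ℝ := Measure.map X P with hμ
  haveI : IsProbabilityMeasure ν := isProbabilityMeasure_uniformIcc hΔ
  haveI : IsProbabilityMeasure μ := Measure.isProbabilityMeasure_map hX.aemeasurable
  -- measurability of the error function
  have hQ : Measurable (fun y : ℝ => uniformQuantizer Δ y - y) := by
    have : (fun y : ℝ => uniformQuantizer Δ y - y)
        = (toIocMod hΔ (-(Δ / 2))) ∘ Neg.neg := by
      funext y; exact quant_error_eq hΔ y
    rw [this]
    exact (measurable_toIocMod hΔ _).comp measurable_neg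
  set g : ℝ × ℝ → ℝ := fun p => uniformQuantizer Δ (p.1 + p.2) - (p.1 + p.2) with hg
  have hgmeas : Measurable g := hQ.comp (measurable_fst.add measurable_snd)
  set T : ℝ × ℝ → ℝ × ℝ := fun p => (p.1, g p) with hT
  have hTmeas : Measurable T := measurable_fst.prodMk hgmeas
  -- joint law of (X, U) is the product measure
  have hXU : Measure.map (fun ω => (X ω, U ω)) P = μ.prod ν := by
    rw [hμ, ← hUlaw]
    exact (indepFun_iff_map_prod_eq_prod_map_map hX.aemeasurable hU.aemeasurable).1 hindep
  -- rewrite the joint law of (X, e)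
  have hcomp : (fun ω => (X ω, e ω)) = T ∘ (fun ω => (X ω, U ω)) := by
    funext ω
    simp only [Function.comp_apply, hT, hg, he]
  rw [hcomp, ← Measure.map_map hTmeas (hX.prodMk hU), hXU]
  -- it remains to show that the product measure is invariant under T
  refine (Measure.prod_eq (μ := μ) (ν := ν) fun s t hs ht => ?_).symm
  rw [Measure.map_apply hTmeas (hs.prod ht),
    Measure.prod_apply (hTmeas (hs.prod ht))]
  have key : ∀ x : ℝ, ν ((fun u => g (x, u)) ⁻¹' t) = ν t := by
    intro x
    have hm : Measurable (fun u : ℝ => g (x, u)) := hQ.comp (measurable_const.add measurable_id)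
    rw [← Measure.map_apply hm ht]
    exact congrFun (congrArg _ (fiber_map hΔ x)) t
  have hfib : ∀ x : ℝ, ν (Prod.mk x ⁻¹' (T ⁻¹' (s ×ˢ t)))
      = s.indicator (fun _ => ν t) x := by
    intro x
    by_cases hxs : x ∈ s
    · rw [Set.indicator_of_mem hxs, ← key x]
      congr 1
      ext u
      simp [hT, Set.mem_prod, hxs]
    · rw [Set.indicator_of_notMem hxs]
      convert measure_empty (μ := ν)
      ext u
      simp [hT, Set.mem_prod, hxs]
  simp_rw [hfib]
  rw [lintegral_indicator_const hs, mul_comm]
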